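/- Under the hypotheses ρ A(θ) ρ = -A(-θ) (reversibility) and with Ā a logarithm of the monodromy Φ(1) chosen in a set Ω where exp is injective, -Ω ⊆ Ω, and ρΩρ ⊆ Ω, one has ρ Ā ρ = -Ā, and consequently exp(-Āτ) ρ = ρ exp(Āτ) for all τ ∈ ℝ. -/

import Mathlib

open Matrix NormedSpace Set

attribute [local instance] Matrix.normedAddCommGroup Matrix.normedSpace



-- global ODE uniqueness
theorem my_ODE_unique {E : Type*} [NormedAddCommGroup E] [NormedSpace ℝ E]
    {v : ℝ → E → E} {K : NNReal} (hv : ∀ t, LipschitzWith K (v t))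
    {f g : ℝ → E} (hf : ∀ t, HasDerivAt f (v t (f t)) t)
    (hg : ∀ t, HasDerivAt g (v t (g t)) t) (h0 : f 0 = g 0) : ∀ t, f t = g t := by
  intro t
  have h1 : (0:ℝ) < |t| + 1 := by positivity
  have := ODE_solution_unique_of_mem_Icc (s := fun _ => (univ : Set E))
    (fun t _ => (hv t).lipschitzOnWith) (t₀ := 0) (a := -(|t|+1)) (b := |t|+1)
    (by constructor <;> [linarith; linarith])
    (continuous_iff_continuousAt.2 fun s => (hf s).continuousAt).continuousOn
    (fun s _ => hf s) (fun _ _ => trivial)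
    (continuous_iff_continuousAt.2 fun s => (hg s).continuousAt).continuousOn
    (fun s _ => hg s) (fun _ _ => trivial) h0
  exact this ⟨by have := neg_abs_le t; linarith, by have := le_abs_self t; linarith⟩

theorem my_norm_mul {n : ℕ} (M N : Matrix (Fin n) (Fin n) ℝ) :
    ‖M * N‖ ≤ n * ‖M‖ * ‖N‖ := by
  have hnn : (0:ℝ) ≤ n * ‖M‖ * ‖N‖ := by positivity
  rw [Matrix.norm_le_iff hnn]
  intro i j
  calc ‖(M * N) i j‖ = ‖∑ k, M i k * N k j‖ := by rw [Matrix.mul_apply]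
    _ ≤ ∑ k, ‖M i k * N k j‖ := norm_sum_le _ _
    _ ≤ ∑ _k : Fin n, ‖M‖ * ‖N‖ := by
        apply Finset.sum_le_sum
        intro k _
        rw [norm_mul]
        exact mul_le_mul (Matrix.norm_entry_le_entrywise_sup_norm M)
          (Matrix.norm_entry_le_entrywise_sup_norm N) (norm_nonneg _) (norm_nonneg _)
    _ = n * ‖M‖ * ‖N‖ := by simp [Finset.sum_const, mul_assoc]

theorem my_hasDerivAt_conj {n : ℕ} (B C : Matrix (Fin n) (Fin n) ℝ)
    {f : ℝ → Matrix (Fin n) (Fin n) ℝ} {f' : Matrix (Fin n) (Fin n) ℝ} {t : ℝ}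
    (hf : HasDerivAt f f' t) :
    HasDerivAt (fun τ => B * f τ * C) (B * f' * C) t := by
  let L : Matrix (Fin n) (Fin n) ℝ →ₗ[ℝ] Matrix (Fin n) (Fin n) ℝ :=
    (LinearMap.mulRight ℝ C).comp (LinearMap.mulLeft ℝ B)
  have := (L.toContinuousLinearMap.hasFDerivAt (x := f t)).comp_hasDerivAt t hf
  exact this



theorem stmt_5 (n : ℕ)
    (A : ℝ → Matrix (Fin n) (Fin n) ℝ)
    (hA : Continuous A)
    (hAper : ∀ τ, A (τ + 1) = A τ)
    (ρ : Matrix (Fin n) (Fin n) ℝ)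
    (hρ : ρ * ρ = 1)
    (hrev : ∀ θ : ℝ, ρ * A θ * ρ = -A (-θ))
    (Φ : ℝ → Matrix (Fin n) (Fin n) ℝ)
    (hΦ : ∀ τ, HasDerivAt Φ (A τ * Φ τ) τ)
    (hΦ0 : Φ 0 = 1)
    (Ω : Set (Matrix (Fin n) (Fin n) ℝ))
    (hinj : Set.InjOn (exp) Ω)
    (hneg : ∀ X ∈ Ω, -X ∈ Ω)
    (hconj : ∀ X ∈ Ω, ρ * X * ρ ∈ Ω)
    (Abar : Matrix (Fin n) (Fin n) ℝ)
    (hmem : Abar ∈ Ω)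
    (hAbar : exp Abar = Φ 1) :
    ρ * Abar * ρ = -Abar ∧
      ∀ τ : ℝ, exp (-(τ • Abar)) * ρ = ρ * exp (τ • Abar) := by
  -- periodicity & boundedness of A
  have hper : Function.Periodic A 1 := hAper
  obtain ⟨t₀, -, ht₀⟩ := (isCompact_Icc (a := (0:ℝ)) (b := 1)).exists_isMaxOn
    (nonempty_Icc.2 zero_le_one) (hA.norm.continuousOn)
  have hbound : ∀ t, ‖A t‖ ≤ ‖A t₀‖ := by
    intro t
    have h1 : A (t - (⌊t⌋ : ℝ) * 1) = A t := hper.sub_int_mul_eq ⌊t⌋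
    have h2 : t - (⌊t⌋:ℝ) * 1 ∈ Icc (0:ℝ) 1 := by
      have hf1 := Int.floor_le t
      have hf2 := Int.lt_floor_add_one t
      rw [mul_one, Set.mem_Icc]
      constructor <;> linarith
    calc ‖A t‖ = ‖A (t - (⌊t⌋:ℝ) * 1)‖ := by rw [h1]
      _ ≤ ‖A t₀‖ := ht₀ h2
  -- Lipschitz field
  set K : NNReal := ⟨n * ‖A t₀‖ + 1, by positivity⟩ with hK
  have hlip : ∀ t, LipschitzWith K (fun w : Matrix (Fin n) (Fin n) ℝ => A t * w) := by
    intro t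
    apply LipschitzWith.of_dist_le_mul
    intro x y
    rw [dist_eq_norm, dist_eq_norm, ← mul_sub]
    calc ‖A t * (x - y)‖ ≤ n * ‖A t‖ * ‖x - y‖ := my_norm_mul _ _
      _ ≤ (K : ℝ) * ‖x - y‖ := by
          apply mul_le_mul_of_nonneg_right _ (norm_nonneg _)
          have := hbound t
          have hn : (0:ℝ) ≤ n := by positivity
          show (n:ℝ) * ‖A t‖ ≤ n * ‖A t₀‖ + 1
          nlinarith [norm_nonneg (A t₀)]
  -- step 1 : ρ Φ(-τ) ρ = Φ τ
  have step1 : ∀ τ, ρ * Φ (-τ) * ρ = Φ τ := by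
    have hψ : ∀ τ, HasDerivAt (fun τ => ρ * Φ (-τ) * ρ) (A τ * (ρ * Φ (-τ) * ρ)) τ := by
      intro τ
      have h1 : HasDerivAt (fun τ : ℝ => Φ (-τ)) ((-1 : ℝ) • (A (-τ) * Φ (-τ))) τ :=
        (hΦ (-τ)).scomp τ (hasDerivAt_neg τ)
      have h2 := my_hasDerivAt_conj ρ ρ h1
      convert h2 using 1
      have h3 : ρ * A (-τ) * ρ = -A τ := by simpa using hrev (-τ)
      have h4 : -(ρ * A (-τ) * ρ) = A τ := by rw [h3, neg_neg]
      have hρρ : ∀ X : Matrix (Fin n) (Fin n) ℝ, ρ * (ρ * X) = X := fun X => by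
        rw [← Matrix.mul_assoc, hρ, Matrix.one_mul]
      rw [← h4, neg_smul, one_smul]
      simp only [Matrix.neg_mul, Matrix.mul_neg, neg_inj, Matrix.mul_assoc, hρρ]
    have := my_ODE_unique hlip hψ hΦ (by simp [hΦ0, hρ])
    exact this
  -- step 2 : Φ (τ+1) = Φ τ * Φ 1
  have step2 : ∀ τ, Φ (τ + 1) = Φ τ * Φ 1 := by
    have hf : ∀ τ, HasDerivAt (fun τ => Φ (τ + 1)) (A τ * Φ (τ + 1)) τ := by
      intro τ
      have h1 : HasDerivAt (fun τ : ℝ => Φ (τ + 1)) ((1:ℝ) • (A (τ+1) * Φ (τ+1))) τ :=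
        (hΦ (τ+1)).scomp τ ((hasDerivAt_id τ).add_const 1)
      simpa [hAper τ] using h1
    have hg : ∀ τ, HasDerivAt (fun τ => Φ τ * Φ 1) (A τ * (Φ τ * Φ 1)) τ := by
      intro τ
      have := my_hasDerivAt_conj (1 : Matrix (Fin n) (Fin n) ℝ) (Φ 1) (hΦ τ)
      simpa [Matrix.mul_assoc] using this
    exact my_ODE_unique hlip hf hg (by simp [hΦ0])
  -- Φ(-1) * Φ 1 = 1
  have hinv : Φ (-1) * Φ 1 = 1 := by
    have := step2 (-1)
    simpa [hΦ0] using this.symm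
  -- exp(-Abar) * exp(Abar) = 1 and exp(Abar)*exp(-Abar) = 1
  have hee : exp (-Abar) * exp Abar = 1 := by
    rw [← Matrix.exp_add_of_commute (𝔸 := ℝ) (-Abar) Abar ((Commute.refl Abar).neg_left)]
    simp
  have hee' : exp Abar * exp (-Abar) = 1 := by
    rw [← Matrix.exp_add_of_commute (𝔸 := ℝ) Abar (-Abar) ((Commute.refl Abar).neg_right)]
    simp
  -- Φ(-1) = exp (-Abar)
  have hΦm1 : Φ (-1) = exp (-Abar) := by
    calc Φ (-1) = Φ (-1) * (exp Abar * exp (-Abar)) := by rw [hee']; simp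
      _ = (Φ (-1) * Φ 1) * exp (-Abar) := by rw [hAbar, Matrix.mul_assoc]
      _ = exp (-Abar) := by rw [hinv, one_mul]
  -- key conjugation identity
  have hρu : IsUnit ρ := ⟨⟨ρ, ρ, hρ, hρ⟩, rfl⟩
  have hρinv : ρ⁻¹ = ρ := Matrix.inv_eq_right_inv hρ
  have hexpconj : ∀ X : Matrix (Fin n) (Fin n) ℝ,
      exp (ρ * X * ρ) = ρ * exp X * ρ := by
    intro X
    have := Matrix.exp_conj (𝔸 := ℝ) ρ X hρu
    rwa [hρinv] at this
  have hkey : exp (ρ * (-Abar) * ρ) = exp Abar := by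
    rw [hexpconj, ← hΦm1, hAbar]
    exact step1 1
  have hconjmem : ρ * (-Abar) * ρ ∈ Ω := hconj _ (hneg _ hmem)
  have h5 : ρ * (-Abar) * ρ = Abar := hinj hconjmem hmem hkey
  have hmain : ρ * Abar * ρ = -Abar := by
    have h7 : -(ρ * Abar * ρ) = Abar := by
      have h8 : ρ * -Abar * ρ = -(ρ * Abar * ρ) := by
        simp [Matrix.mul_neg, Matrix.neg_mul]
      rw [← h8]; exact h5
    exact neg_eq_iff_eq_neg.mp h7
  refine ⟨hmain, fun τ => ?_⟩
  have h6 : -(τ • Abar) = ρ * (τ • Abar) * ρ := by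
    have : ρ * (τ • Abar) * ρ = τ • (ρ * Abar * ρ) := by
      simp [Matrix.mul_smul, Matrix.smul_mul]
    rw [this, hmain, smul_neg]
  rw [h6, hexpconj, Matrix.mul_assoc, Matrix.mul_assoc, hρ, Matrix.mul_one]
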